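/- For all n ≥ 1, q(p(n)) = p(n) + q(n) - 1. -/
import Mathlib

namespace Stmt9Aux

structure H (p q : ℕ → ℕ) : Prop where
  hp1 : p 1 = 1
  hq : ∀ n, 1 ≤ n → q n = p n + n
  hmin : ∀ n, 1 ≤ n →
    IsLeast {m : ℕ | 0 < m ∧ ∀ i, 1 ≤ i → i ≤ n → m ≠ p i ∧ m ≠ q i} (p (n + 1))

variable {p q : ℕ → ℕ}

lemma ppos (h : H p q) : ∀ n, 1 ≤ n → 1 ≤ p n := by
  intro n hn
  rcases Nat.exists_eq_add_of_le hn with ⟨k, rfl⟩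
  cases k with
  | zero => simp [h.hp1]
  | succ k => exact (h.hmin (1 + k) (by omega)).1.1

lemma pstep (h : H p q) : ∀ n, 1 ≤ n → p n < p (n + 1) := by
  intro n hn
  have hne : p (n + 1) ≠ p n := ((h.hmin n hn).1.2 n hn le_rfl).1
  have hle : p n ≤ p (n + 1) := by
    rcases Nat.exists_eq_add_of_le hn with ⟨k, rfl⟩
    cases k with
    | zero => simpa [h.hp1] using ppos h 2 (by omega)
    | succ k =>
      have hk : 1 ≤ 1 + k := by omega
      refine (h.hmin (1 + k) hk).2 ?_
      refine ⟨(h.hmin (1 + (k+1)) (by omega)).1.1, fun i h1 h2 => ?_⟩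
      exact (h.hmin (1 + (k+1)) (by omega)).1.2 i h1 (by omega)
  omega

lemma pmono (h : H p q) : ∀ a b, 1 ≤ a → a < b → p a < p b := by
  intro a b ha hab
  induction b with
  | zero => omega
  | succ b ih =>
    rcases Nat.lt_succ_iff_lt_or_eq.1 hab with hb | rfl
    · exact lt_trans (ih hb) (pstep h b (by omega))
    · exact pstep h a ha

lemma pmono' (h : H p q) : ∀ a b, 1 ≤ a → a ≤ b → p a ≤ p b := by
  intro a b ha hab
  rcases eq_or_lt_of_le hab with rfl | hlt
  · exact le_rfl
  · exact le_of_lt (pmono h a b ha hlt)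

lemma pge (h : H p q) : ∀ n, 1 ≤ n → n ≤ p n := by
  intro n hn
  induction n with
  | zero => omega
  | succ n ih =>
    cases n with
    | zero => simp [h.hp1]
    | succ m =>
      have := pstep h (m+1) (by omega)
      have := ih (by omega)
      omega

lemma qmono (h : H p q) : ∀ a b, 1 ≤ a → a ≤ b → q a ≤ q b := by
  intro a b ha hab
  rw [h.hq a ha, h.hq b (le_trans ha hab)]
  have := pmono' h a b ha hab
  omega

lemma pq_ne (h : H p q) : ∀ i j, 1 ≤ i → 1 ≤ j → p i ≠ q j := by
  intro i j hi hj
  rcases le_or_gt i j with hij | hij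
  · have h1 : p i ≤ p j := pmono' h i j hi hij
    have := h.hq j hj
    omega
  · obtain ⟨k, rfl⟩ : ∃ k, i = k + 1 := ⟨i - 1, by omega⟩
    exact ((h.hmin k (by omega)).1.2 j hj (by omega)).2

lemma cover (h : H p q) : ∀ n, 1 ≤ n → ∀ k, 1 ≤ k → k < p (n + 1) →
    ∃ i, 1 ≤ i ∧ i ≤ n ∧ (k = p i ∨ k = q i) := by
  intro n hn k hk hkP
  by_contra hc
  push_neg at hc
  have hmem : k ∈ {m : ℕ | 0 < m ∧ ∀ i, 1 ≤ i → i ≤ n → m ≠ p i ∧ m ≠ q i} := by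
    refine ⟨hk, fun i h1 h2 => ?_⟩
    have := hc i h1 h2
    exact ⟨this.1, this.2⟩
  have := (h.hmin n hn).2 hmem
  omega

lemma count (h : H p q) : ∀ m, 1 ≤ m →
    ∃ c, p m = m + c ∧ ∀ j, 1 ≤ j → (q j < p m ↔ j ≤ c) := by
  intro m hm
  set P := p m with hP
  set c := Nat.findGreatest (fun j => q j < P) P with hc
  have qlb : ∀ j, 1 ≤ j → j + 1 ≤ q j := by
    intro j hj
    have := ppos h j hj
    rw [h.hq j hj]; omega
  have hiff : ∀ j, 1 ≤ j → (q j < P ↔ j ≤ c) := by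
    intro j hj
    constructor
    · intro hqj
      exact Nat.le_findGreatest (by have := qlb j hj; omega) hqj
    · intro hjc
      have hc1 : 1 ≤ c := le_trans hj hjc
      have hspec : q c < P := by
        have := Nat.findGreatest_of_ne_zero hc.symm (by omega)
        exact this
      exact lt_of_le_of_lt (qmono h j c hj hjc) hspec
  refine ⟨c, ?_, hiff⟩
  -- counting
  have hinjp : Set.InjOn p (Finset.Ico 1 m : Finset ℕ) := by
    intro a ha b hb hab
    simp only [Finset.coe_Ico, Set.mem_Ico] at ha hb
    by_contra hne
    rcases lt_or_gt_of_ne hne with hl | hl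
    · exact absurd hab (ne_of_lt (pmono h a b ha.1 hl))
    · exact absurd hab.symm (ne_of_lt (pmono h b a hb.1 hl))
  have hinjq : Set.InjOn q (Finset.Icc 1 c : Finset ℕ) := by
    intro a ha b hb hab
    simp only [Finset.coe_Icc, Set.mem_Icc] at ha hb
    by_contra hne
    rcases lt_or_gt_of_ne hne with hl | hl
    · have h1 := qmono h (a+1) b (by omega) hl
      have h2 := qlb a ha.1
      have h3 : q a < q (a+1) := by
        rw [h.hq a ha.1, h.hq (a+1) (by omega)]
        have := pstep h a ha.1
        omega
      omega
    · have h3 : q b < q (b+1) := by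
        rw [h.hq b hb.1, h.hq (b+1) (by omega)]
        have := pstep h b hb.1
        omega
      have h1 := qmono h (b+1) a (by omega) hl
      omega
  set A := (Finset.Ico 1 m).image p with hA
  set B := (Finset.Icc 1 c).image q with hB
  have hAcard : A.card = m - 1 := by
    rw [hA, Finset.card_image_of_injOn hinjp, Nat.card_Ico]
  have hBcard : B.card = c := by
    rw [hB, Finset.card_image_of_injOn hinjq, Nat.card_Icc]
    omega
  have hunion : Finset.Ico 1 P = A ∪ B := by
    ext k
    simp only [Finset.mem_Ico, Finset.mem_union, hA, hB, Finset.mem_image,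
      Finset.mem_Icc]
    constructor
    · rintro ⟨hk1, hkP⟩
      obtain ⟨m', rfl⟩ : ∃ m', m = m' + 1 := ⟨m - 1, by omega⟩
      cases m' with
      | zero =>
        exfalso; rw [hP] at hkP; rw [h.hp1] at hkP; omega
      | succ m'' =>
        obtain ⟨i, hi1, hi2, hpq⟩ := cover h (m''+1) (by omega) k hk1 hkP
        rcases hpq with rfl | rfl
        · exact Or.inl ⟨i, ⟨by omega, by omega⟩, rfl⟩
        · have : i ≤ c := (hiff i hi1).1 hkP
          exact Or.inr ⟨i, ⟨hi1, this⟩, rfl⟩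
    · rintro (⟨i, ⟨hi1, hi2⟩, rfl⟩ | ⟨j, ⟨hj1, hj2⟩, rfl⟩)
      · exact ⟨ppos h i hi1, pmono h i m hi1 hi2⟩
      · refine ⟨by have := qlb j hj1; omega, (hiff j hj1).2 hj2⟩
  have hdisj : Disjoint A B := by
    rw [Finset.disjoint_left]
    rintro k hk hk'
    simp only [hA, hB, Finset.mem_image, Finset.mem_Ico, Finset.mem_Icc] at hk hk'
    obtain ⟨i, ⟨hi1, _⟩, rfl⟩ := hk
    obtain ⟨j, ⟨hj1, _⟩, hj⟩ := hk'
    exact pq_ne h i j hi1 hj1 hj.symm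
  have hcard : P - 1 = (m - 1) + c := by
    have := Finset.card_union_of_disjoint hdisj
    rw [← hunion, hAcard, hBcard] at this
    simpa [Nat.card_Ico] using this
  have hPm : m ≤ P := by rw [hP]; exact pge h m hm
  omega

lemma main (h : H p q) : ∀ n, 1 ≤ n → p (p n) = p n + n - 1 := by
  intro n hn
  have hpn : 1 ≤ p n := ppos h n hn
  obtain ⟨c, hc1, hc2⟩ := count h (p n) hpn
  have hcub : c ≤ n - 1 := by
    by_contra hcon
    push_neg at hcon
    have hc1' : 1 ≤ c := by omega
    have hqc : q c < p (p n) := (hc2 c hc1').2 le_rfl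
    rw [h.hq c hc1', hc1] at hqc
    have hpc : p c < p n := by omega
    have := pmono' h n c hn (by omega)
    omega
  have hclb : n - 1 ≤ c := by
    by_contra hcon
    push_neg at hcon
    have hcn : c + 1 < n := by omega
    have hnot : ¬ (q (c+1) < p (p n)) := by
      intro hlt
      have := (hc2 (c+1) (by omega)).1 hlt
      omega
    push_neg at hnot
    have hne : p (p n) ≠ q (c+1) := pq_ne h (p n) (c+1) hpn (by omega)
    have hgt : p (p n) < q (c+1) := by omega
    rw [h.hq (c+1) (by omega), hc1] at hgt
    have := pmono h (c+1) n (by omega) hcn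
    omega
  have : c = n - 1 := le_antisymm hcub hclb
  omega

end Stmt9Aux

/-- Wythoff sequences: `p 1 = 1`, `q n = p n + n` for `n ≥ 1`, and `p (n+1)` is the
smallest positive integer not contained in `U_n = {p 1, …, p n, q 1, …, q n}`. -/

theorem stmt_9 (p q : ℕ → ℕ)
    (hp1 : p 1 = 1)
    (hq : ∀ n, 1 ≤ n → q n = p n + n)
    (hmin : ∀ n, 1 ≤ n →
      IsLeast {m : ℕ | 0 < m ∧ ∀ i, 1 ≤ i → i ≤ n → m ≠ p i ∧ m ≠ q i} (p (n + 1))) :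
    ∀ n, 1 ≤ n → q (p n) = p n + q n - 1 := by
  have h : Stmt9Aux.H p q := ⟨hp1, hq, hmin⟩
  intro n hn
  have hpn : 1 ≤ p n := Stmt9Aux.ppos h n hn
  have h1 := Stmt9Aux.main h n hn
  have h2 := hq (p n) hpn
  have h3 := hq n hn
  omega
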